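/- Let γ > 0 and let C : [0,1]² → [0,1] be a measurable function that is 2-increasing, i.e. C(u₂,v₂) − C(u₂,v₁) − C(u₁,v₂) + C(u₁,v₁) ≥ 0 whenever 0 ≤ u₁ ≤ u₂ ≤ 1 and 0 ≤ v₁ ≤ v₂ ≤ 1. Define, for u, v ∈ (0,1], C*(u,v) = ∫₀^∞ C(exp{−w(u^{−γ}−1)/γ}, exp{−w(v^{−γ}−1)/γ}) f_γ(w) dw. Then C* is 2-increasing on (0,1]²: for 0 < u₁ ≤ u₂ ≤ 1 and 0 < v₁ ≤ v₂ ≤ 1, C*(u₂,v₂) − C*(u₂,v₁) − C*(u₁,v₂) + C*(u₁,v₁) ≥ 0. -/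

import Mathlib

open MeasureTheory Real

/-- The gamma frailty density with shape `1/γ` and scale `γ`. -/
noncomputable def gammaFrailtyDensity (γ w : ℝ) : ℝ :=
  w ^ (1 / γ - 1) * Real.exp (-w / γ) / (Real.Gamma (1 / γ) * γ ^ (1 / γ))

lemma gammaFrailtyDensity_integrableOn (γ : ℝ) (hγ : 0 < γ) :
    IntegrableOn (fun w => gammaFrailtyDensity γ w) (Set.Ioi (0 : ℝ)) := by
  have h : IntegrableOn (fun w : ℝ => w ^ (1 / γ - 1) * Real.exp (-(1/γ) * w ^ (1:ℝ)))
      (Set.Ioi (0 : ℝ)) :=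
    integrableOn_rpow_mul_exp_neg_mul_rpow (by
      have : (0:ℝ) < 1/γ := by positivity
      linarith) one_pos (by positivity)
  have h2 : IntegrableOn (fun w : ℝ => w ^ (1 / γ - 1) * Real.exp (-w / γ))
      (Set.Ioi (0 : ℝ)) := by
    refine h.congr_fun (fun w _ => ?_) measurableSet_Ioi
    simp only [Real.rpow_one]
    ring_nf
  simpa [gammaFrailtyDensity, IntegrableOn] using h2.div_const (Real.Gamma (1 / γ) * γ ^ (1 / γ))

theorem frailty_induced_copula_two_increasing (γ : ℝ) (hγ : 0 < γ)
    (C : ℝ → ℝ → ℝ)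
    (hCmeas : Measurable fun p : ℝ × ℝ => C p.1 p.2)
    (hCrange : ∀ x ∈ Set.Icc (0 : ℝ) 1, ∀ y ∈ Set.Icc (0 : ℝ) 1, C x y ∈ Set.Icc (0 : ℝ) 1)
    (hC2 : ∀ u₁ u₂ v₁ v₂ : ℝ, 0 ≤ u₁ → u₁ ≤ u₂ → u₂ ≤ 1 → 0 ≤ v₁ → v₁ ≤ v₂ → v₂ ≤ 1 →
      0 ≤ C u₂ v₂ - C u₂ v₁ - C u₁ v₂ + C u₁ v₁)
    (Cstar : ℝ → ℝ → ℝ)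
    (hCstar : ∀ u ∈ Set.Ioc (0 : ℝ) 1, ∀ v ∈ Set.Ioc (0 : ℝ) 1,
      Cstar u v = ∫ w in Set.Ioi (0 : ℝ),
        C (Real.exp (-(w * (u ^ (-γ) - 1) / γ))) (Real.exp (-(w * (v ^ (-γ) - 1) / γ))) *
          gammaFrailtyDensity γ w) :
    ∀ u₁ u₂ v₁ v₂ : ℝ, 0 < u₁ → u₁ ≤ u₂ → u₂ ≤ 1 → 0 < v₁ → v₁ ≤ v₂ → v₂ ≤ 1 →
      0 ≤ Cstar u₂ v₂ - Cstar u₂ v₁ - Cstar u₁ v₂ + Cstar u₁ v₁ := by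
  intro u₁ u₂ v₁ v₂ hu₁ hu hu₂ hv₁ hv hv₂
  have hu₂0 : 0 < u₂ := lt_of_lt_of_le hu₁ hu
  have hv₂0 : 0 < v₂ := lt_of_lt_of_le hv₁ hv
  have hgd : IntegrableOn (fun w => gammaFrailtyDensity γ w) (Set.Ioi (0 : ℝ)) :=
    gammaFrailtyDensity_integrableOn γ hγ
  have hgd_nonneg : ∀ w ∈ Set.Ioi (0:ℝ), 0 ≤ gammaFrailtyDensity γ w := by
    intro w hw
    have hw' : (0:ℝ) < w := hw
    unfold gammaFrailtyDensity
    positivity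
  -- the exponential arguments lie in [0,1]
  have hexp_mem : ∀ u : ℝ, 0 < u → u ≤ 1 → ∀ w ∈ Set.Ioi (0:ℝ),
      Real.exp (-(w * (u ^ (-γ) - 1) / γ)) ∈ Set.Icc (0:ℝ) 1 := by
    intro u hu0 hu1 w hw
    constructor
    · exact (Real.exp_pos _).le
    · apply Real.exp_le_one_iff.mpr
      have h1 : (1:ℝ) ≤ u ^ (-γ) := by
        rw [Real.rpow_neg hu0.le]
        rw [le_inv_comm₀ one_pos (Real.rpow_pos_of_pos hu0 γ)]
        simpa using Real.rpow_le_one hu0.le hu1 hγ.le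
      have hw' : (0:ℝ) < w := hw
      have : 0 ≤ w * (u ^ (-γ) - 1) / γ := by
        apply div_nonneg _ hγ.le
        nlinarith
      linarith
  -- monotonicity of the exponential argument in u
  have hexp_mono : ∀ a b : ℝ, 0 < a → a ≤ b → b ≤ 1 → ∀ w ∈ Set.Ioi (0:ℝ),
      Real.exp (-(w * (a ^ (-γ) - 1) / γ)) ≤ Real.exp (-(w * (b ^ (-γ) - 1) / γ)) := by
    intro a b ha hab hb1 w hw
    apply Real.exp_le_exp.mpr
    have hb : (0:ℝ) < b := lt_of_lt_of_le ha hab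
    have h : b ^ (-γ) ≤ a ^ (-γ) := by
      apply Real.rpow_le_rpow_of_nonpos ha hab (by linarith)
    have hw' : (0:ℝ) < w := hw
    have h2 : w * (b ^ (-γ) - 1) ≤ w * (a ^ (-γ) - 1) := by nlinarith
    have h3 : w * (b ^ (-γ) - 1) / γ ≤ w * (a ^ (-γ) - 1) / γ :=
      div_le_div_of_nonneg_right h2 hγ.le
    linarith
  -- integrability of each integrand
  have hint : ∀ u : ℝ, 0 < u → u ≤ 1 → ∀ v : ℝ, 0 < v → v ≤ 1 →
      IntegrableOn (fun w => C (Real.exp (-(w * (u ^ (-γ) - 1) / γ)))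
        (Real.exp (-(w * (v ^ (-γ) - 1) / γ))) * gammaFrailtyDensity γ w)
        (Set.Ioi (0 : ℝ)) := by
    intro u hu0 hu1 v hv0 hv1
    have hmeas : Measurable (fun w : ℝ => C (Real.exp (-(w * (u ^ (-γ) - 1) / γ)))
        (Real.exp (-(w * (v ^ (-γ) - 1) / γ))) * gammaFrailtyDensity γ w) := by
      apply Measurable.mul
      · exact hCmeas.comp ((Measurable.exp (by fun_prop)).prodMk (Measurable.exp (by fun_prop)))
      · unfold gammaFrailtyDensity
        fun_prop
    refine Integrable.mono' hgd hmeas.aestronglyMeasurable ?_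
    filter_upwards [self_mem_ae_restrict (measurableSet_Ioi : MeasurableSet (Set.Ioi (0:ℝ)))]
      with w hw
    have hC := hCrange _ (hexp_mem u hu0 hu1 w hw) _ (hexp_mem v hv0 hv1 w hw)
    have hg := hgd_nonneg w hw
    rw [Real.norm_eq_abs, abs_of_nonneg (mul_nonneg hC.1 hg)]
    calc C _ _ * gammaFrailtyDensity γ w ≤ 1 * gammaFrailtyDensity γ w :=
          mul_le_mul_of_nonneg_right hC.2 hg
      _ = gammaFrailtyDensity γ w := one_mul _
  have h22 := hint u₂ hu₂0 hu₂ v₂ hv₂0 hv₂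
  have h21 := hint u₂ hu₂0 hu₂ v₁ hv₁ (le_trans hv hv₂)
  have h12 := hint u₁ hu₁ (le_trans hu hu₂) v₂ hv₂0 hv₂
  have h11 := hint u₁ hu₁ (le_trans hu hu₂) v₁ hv₁ (le_trans hv hv₂)
  rw [hCstar u₂ ⟨hu₂0, hu₂⟩ v₂ ⟨hv₂0, hv₂⟩, hCstar u₂ ⟨hu₂0, hu₂⟩ v₁ ⟨hv₁, le_trans hv hv₂⟩,
    hCstar u₁ ⟨hu₁, le_trans hu hu₂⟩ v₂ ⟨hv₂0, hv₂⟩,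
    hCstar u₁ ⟨hu₁, le_trans hu hu₂⟩ v₁ ⟨hv₁, le_trans hv hv₂⟩,
    ← integral_sub h22 h21]
  have hA : IntegrableOn (fun w => C (Real.exp (-(w * (u₂ ^ (-γ) - 1) / γ)))
      (Real.exp (-(w * (v₂ ^ (-γ) - 1) / γ))) * gammaFrailtyDensity γ w -
      C (Real.exp (-(w * (u₂ ^ (-γ) - 1) / γ)))
      (Real.exp (-(w * (v₁ ^ (-γ) - 1) / γ))) * gammaFrailtyDensity γ w)
      (Set.Ioi (0 : ℝ)) := h22.sub h21
  rw [← integral_sub hA h12]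
  have hB : IntegrableOn (fun w => (C (Real.exp (-(w * (u₂ ^ (-γ) - 1) / γ)))
      (Real.exp (-(w * (v₂ ^ (-γ) - 1) / γ))) * gammaFrailtyDensity γ w -
      C (Real.exp (-(w * (u₂ ^ (-γ) - 1) / γ)))
      (Real.exp (-(w * (v₁ ^ (-γ) - 1) / γ))) * gammaFrailtyDensity γ w) -
      C (Real.exp (-(w * (u₁ ^ (-γ) - 1) / γ)))
      (Real.exp (-(w * (v₂ ^ (-γ) - 1) / γ))) * gammaFrailtyDensity γ w)
      (Set.Ioi (0 : ℝ)) := hA.sub h12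
  rw [← integral_add hB h11]
  apply setIntegral_nonneg measurableSet_Ioi
  intro w hw
  have hg := hgd_nonneg w hw
  have e1 := hexp_mem u₁ hu₁ (le_trans hu hu₂) w hw
  have e2 := hexp_mem u₂ hu₂0 hu₂ w hw
  have e3 := hexp_mem v₁ hv₁ (le_trans hv hv₂) w hw
  have e4 := hexp_mem v₂ hv₂0 hv₂ w hw
  have m1 := hexp_mono u₁ u₂ hu₁ hu hu₂ w hw
  have m2 := hexp_mono v₁ v₂ hv₁ hv hv₂ w hw
  have hC := hC2 (Real.exp (-(w * (u₁ ^ (-γ) - 1) / γ))) (Real.exp (-(w * (u₂ ^ (-γ) - 1) / γ)))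
    (Real.exp (-(w * (v₁ ^ (-γ) - 1) / γ))) (Real.exp (-(w * (v₂ ^ (-γ) - 1) / γ)))
    e1.1 m1 e2.2 e3.1 m2 e4.2
  nlinarith [mul_nonneg hC hg]
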